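/- Let X = (X_k) ∈ {0,1}^ℕ be drawn from the balanced Bernoulli measure and set a_X(n) = ∑_{k=0}^{n} X_k 2^k. Then almost surely Var(μ_{a_X(n)}) / n → 1/2 as n → ∞, where Var(μ_a) = ∑_{d∈ℤ} d² μ_a(d). -/

import Mathlib

open Filter Finset MeasureTheory ProbabilityTheory

/-- `s₂ n` is the number of 1's in the binary expansion of `n`. -/
def s2 (n : ℕ) : ℕ := (Nat.digits 2 n).sum

/-- The counting sequence whose limit is the asymptotic density
`μ_a(d)` of `{m : s₂(m+a) - s₂(m) = d}`. -/
noncomputable def densSeq (a : ℕ) (d : ℤ) (N : ℕ) : ℝ :=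
  (((Finset.range N).filter fun n => (s2 (n + a) : ℤ) - s2 n = d).card : ℝ) / N

/-- The variance of `μ_a`. -/
noncomputable def var (μ : ℕ → ℤ → ℝ) (a : ℕ) : ℝ := ∑' d : ℤ, (d : ℝ) ^ 2 * μ a d

lemma s2_zero : s2 0 = 0 := by simp [s2]

lemma s2_two_mul (m : ℕ) : s2 (2 * m) = s2 m := by
  rcases Nat.eq_zero_or_pos m with rfl | hm
  · rfl
  · unfold s2
    rw [Nat.digits_def' (by norm_num) (by omega)]
    simp [Nat.mul_div_cancel_left _ (by norm_num : 0 < 2), Nat.mul_mod_right]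

lemma s2_two_mul_add_one (m : ℕ) : s2 (2 * m + 1) = s2 m + 1 := by
  unfold s2
  rw [Nat.digits_def' (by norm_num) (by omega)]
  have h1 : (2 * m + 1) % 2 = 1 := by omega
  have h2 : (2 * m + 1) / 2 = m := by omega
  rw [h1, h2]
  simp [Nat.add_comm]

lemma s2_succ_le (n : ℕ) : s2 (n + 1) ≤ s2 n + 1 := by
  induction n using Nat.strong_induction_on with
  | _ n ih =>
    rcases Nat.even_or_odd n with ⟨m, hm⟩ | ⟨m, hm⟩
    · have e : n = 2 * m := by omega
      subst e
      rw [s2_two_mul, s2_two_mul_add_one]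
    · have e : n = 2 * m + 1 := by omega
      subst e
      have h1 : 2 * m + 1 + 1 = 2 * (m + 1) := by ring
      rw [h1, s2_two_mul, s2_two_mul_add_one]
      have := ih m (by omega)
      omega

/-- if the last `r` bits of `n` are not all ones, then `s2 (n+1) ≥ s2 n + 1 - r`. -/
lemma s2_succ_ge (r : ℕ) : ∀ n : ℕ, n % 2 ^ r ≠ 2 ^ r - 1 → s2 n + 1 ≤ s2 (n + 1) + r := by
  induction r with
  | zero => intro n hn; exact absurd (Nat.mod_one n) (by simpa using hn)
  | succ r ih =>
    intro n hn
    rcases Nat.even_or_odd n with ⟨m, hm⟩ | ⟨m, hm⟩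
    · have e : n = 2 * m := by omega
      subst e
      rw [s2_two_mul, s2_two_mul_add_one]
      omega
    · have e : n = 2 * m + 1 := by omega
      subst e
      have h1 : 2 * m + 1 + 1 = 2 * (m + 1) := by ring
      rw [h1, s2_two_mul, s2_two_mul_add_one]
      have hm' : m % 2 ^ r ≠ 2 ^ r - 1 := by
        intro h
        apply hn
        have hp : 0 < 2 ^ r := Nat.pow_pos (by norm_num)
        have hq : m = 2 ^ r * (m / 2 ^ r) + (2 ^ r - 1) := by
          conv_lhs => rw [← Nat.div_add_mod m (2 ^ r)]
          rw [h]
        have h2 : 2 * m + 1 = 2 ^ (r + 1) * (m / 2 ^ r) + (2 ^ (r + 1) - 1) := by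
          rw [pow_succ]
          have : 2 ^ r * 2 * (m / 2 ^ r) = 2 * (2 ^ r * (m / 2 ^ r)) := by ring
          omega
        rw [h2, Nat.mul_add_mod]
        exact Nat.mod_eq_of_lt (by have := Nat.one_le_two_pow (n := r + 1); omega)
      have := ih m hm'
      omega


noncomputable def cnt (a : ℕ) (d : ℤ) (N : ℕ) : ℕ :=
  ((Finset.range N).filter fun n => (s2 (n + a) : ℤ) - s2 n = d).card

lemma densSeq_eq (a : ℕ) (d : ℤ) (N : ℕ) : densSeq a d N = (cnt a d N : ℝ) / N := rfl

lemma sum_range_two_mul {M : Type*} [AddCommMonoid M] (f : ℕ → M) (N : ℕ) :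
    ∑ n ∈ Finset.range (2 * N), f n = ∑ m ∈ Finset.range N, (f (2 * m) + f (2 * m + 1)) := by
  induction N with
  | zero => simp
  | succ N ih =>
    have : 2 * (N + 1) = (2 * N) + 1 + 1 := by ring
    rw [this, Finset.sum_range_succ, Finset.sum_range_succ, Finset.sum_range_succ, ih, add_assoc]

lemma cnt_two_mul (a : ℕ) (d : ℤ) (N : ℕ) : cnt (2 * a) d (2 * N) = 2 * cnt a d N := by
  unfold cnt
  rw [Finset.card_filter, Finset.card_filter, sum_range_two_mul, Finset.mul_sum]
  apply Finset.sum_congr rfl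
  intro m _
  have e1 : 2 * m + 2 * a = 2 * (m + a) := by ring
  have e2 : 2 * m + 1 + 2 * a = 2 * (m + a) + 1 := by ring
  have h1 : ((s2 (2 * m + 2 * a) : ℤ) - s2 (2 * m) = d) ↔ ((s2 (m + a) : ℤ) - s2 m = d) := by
    rw [e1, s2_two_mul, s2_two_mul]
  have h2 : ((s2 (2 * m + 1 + 2 * a) : ℤ) - s2 (2 * m + 1) = d) ↔ ((s2 (m + a) : ℤ) - s2 m = d) := by
    rw [e2, s2_two_mul_add_one, s2_two_mul_add_one]
    constructor <;> intro h <;> push_cast at h ⊢ <;> linarith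
  simp only [h1, h2]
  split <;> simp

lemma cnt_odd (a : ℕ) (d : ℤ) (N : ℕ) :
    cnt (2 * a + 1) d (2 * N) = cnt a (d - 1) N + cnt (a + 1) (d + 1) N := by
  unfold cnt
  rw [Finset.card_filter, Finset.card_filter, Finset.card_filter, sum_range_two_mul,
    ← Finset.sum_add_distrib]
  apply Finset.sum_congr rfl
  intro m _
  have e1 : 2 * m + (2 * a + 1) = 2 * (m + a) + 1 := by ring
  have e2 : 2 * m + 1 + (2 * a + 1) = 2 * (m + (a + 1)) := by ring
  have h1 : ((s2 (2 * m + (2 * a + 1)) : ℤ) - s2 (2 * m) = d) ↔ ((s2 (m + a) : ℤ) - s2 m = d - 1) := by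
    rw [e1, s2_two_mul_add_one, s2_two_mul]
    constructor <;> intro h <;> push_cast at h ⊢ <;> linarith
  have h2 : ((s2 (2 * m + 1 + (2 * a + 1)) : ℤ) - s2 (2 * m + 1) = d) ↔
      ((s2 (m + (a + 1)) : ℤ) - s2 m = d + 1) := by
    rw [e2, s2_two_mul, s2_two_mul_add_one]
    constructor <;> intro h <;> push_cast at h ⊢ <;> linarith
  simp only [h1, h2]

section Mu
variable {μ : ℕ → ℤ → ℝ} (hμ : ∀ a d, Tendsto (densSeq a d) atTop (nhds (μ a d)))

include hμ

lemma mu_nonneg (a : ℕ) (d : ℤ) : 0 ≤ μ a d := by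
  refine ge_of_tendsto (hμ a d) (Eventually.of_forall fun N => ?_)
  exact div_nonneg (Nat.cast_nonneg _) (Nat.cast_nonneg _)

lemma mu_le_one (a : ℕ) (d : ℤ) : μ a d ≤ 1 := by
  refine le_of_tendsto (hμ a d) (eventually_atTop.2 ⟨1, fun N hN => ?_⟩)
  rw [densSeq_eq, div_le_one (by positivity)]
  have h : cnt a d N ≤ N := by
    simpa [cnt] using Finset.card_filter_le (Finset.range N) _
  exact_mod_cast h

lemma mu_zero (d : ℤ) : μ 0 d = if d = 0 then 1 else 0 := by
  refine tendsto_nhds_unique (hμ 0 d) ?_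
  have h : ∀ N : ℕ, 1 ≤ N → densSeq 0 d N = if d = 0 then 1 else 0 := by
    intro N hN
    rw [densSeq_eq]
    unfold cnt
    split
    · rename_i h; subst h
      simp only [Nat.add_zero]
      rw [Finset.filter_true_of_mem (fun n _ => by ring)]
      rw [Finset.card_range, div_self (by positivity)]
    · rename_i h
      rw [Finset.filter_false_of_mem (fun n _ hc => by
        apply h
        have hn : n + 0 = n := rfl
        rw [hn] at hc
        omega), Finset.card_empty]
      simp
  refine Tendsto.congr' ?_ tendsto_const_nhds
  filter_upwards [eventually_ge_atTop 1] with N hN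
  exact (h N hN).symm

lemma mu_two_mul (a : ℕ) (d : ℤ) : μ (2 * a) d = μ a d := by
  have h1 : Tendsto (fun N => densSeq (2 * a) d (2 * N)) atTop (nhds (μ (2 * a) d)) :=
    (hμ (2 * a) d).comp (tendsto_atTop_atTop_of_monotone (fun _ _ h => by omega)
      (fun b => ⟨b, by omega⟩))
  have h2 : ∀ N : ℕ, 1 ≤ N → densSeq (2 * a) d (2 * N) = densSeq a d N := by
    intro N hN
    rw [densSeq_eq, densSeq_eq, cnt_two_mul]
    push_cast
    rw [mul_div_mul_left _ _ (by norm_num)]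
  have h3 : Tendsto (fun N => densSeq (2 * a) d (2 * N)) atTop (nhds (μ a d)) := by
    refine Tendsto.congr' ?_ (hμ a d)
    filter_upwards [eventually_ge_atTop 1] with N hN
    exact (h2 N hN).symm
  exact tendsto_nhds_unique h1 h3

lemma mu_odd (a : ℕ) (d : ℤ) :
    μ (2 * a + 1) d = (1 / 2) * μ a (d - 1) + (1 / 2) * μ (a + 1) (d + 1) := by
  have h1 : Tendsto (fun N => densSeq (2 * a + 1) d (2 * N)) atTop (nhds (μ (2 * a + 1) d)) :=
    (hμ (2 * a + 1) d).comp (tendsto_atTop_atTop_of_monotone (fun _ _ h => by omega)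
      (fun b => ⟨b, by omega⟩))
  have h2 : ∀ N : ℕ, 1 ≤ N → densSeq (2 * a + 1) d (2 * N)
      = (1 / 2) * densSeq a (d - 1) N + (1 / 2) * densSeq (a + 1) (d + 1) N := by
    intro N hN
    rw [densSeq_eq, densSeq_eq, densSeq_eq, cnt_odd]
    have : (N : ℝ) ≠ 0 := by positivity
    push_cast
    field_simp
  have h3 : Tendsto (fun N => densSeq (2 * a + 1) d (2 * N)) atTop
      (nhds ((1 / 2) * μ a (d - 1) + (1 / 2) * μ (a + 1) (d + 1))) := by
    refine Tendsto.congr' ?_ (((hμ a (d - 1)).const_mul _).add ((hμ (a + 1) (d + 1)).const_mul _))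
    filter_upwards [eventually_ge_atTop 1] with N hN
    exact (h2 N hN).symm
  exact tendsto_nhds_unique h1 h3

lemma mu_one_eq_zero (d : ℤ) (hd : 2 ≤ d) : μ 1 d = 0 := by
  refine tendsto_nhds_unique (hμ 1 d) ?_
  have h : ∀ N : ℕ, densSeq 1 d N = 0 := by
    intro N
    rw [densSeq_eq]
    unfold cnt
    rw [Finset.filter_false_of_mem, Finset.card_empty]
    · simp
    · intro n _ h
      have := s2_succ_le n
      have : (s2 (n + 1) : ℤ) - s2 n ≤ 1 := by push_cast; omega
      omega
  simpa [funext h] using tendsto_const_nhds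

lemma mu_one_tail (k : ℕ) : μ 1 (-(k : ℤ)) ≤ (1 / 2) ^ k := by
  -- if s2(n+1) - s2 n = -k then n % 2^k = 2^k - 1
  have key : ∀ N, (cnt 1 (-(k : ℤ)) N : ℝ) ≤ (N : ℝ) / 2 ^ k + 1 := by
    intro N
    have hsub : ((Finset.range N).filter fun n => (s2 (n + 1) : ℤ) - s2 n = -(k : ℤ)) ⊆
        (Finset.range N).filter fun n => n % 2 ^ k = 2 ^ k - 1 := by
      intro n hn
      simp only [Finset.mem_filter, Finset.mem_range] at hn ⊢
      refine ⟨hn.1, ?_⟩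
      by_contra hc
      have := s2_succ_ge k n hc
      have := hn.2
      omega
    have hcard : ((Finset.range N).filter fun n => n % 2 ^ k = 2 ^ k - 1).card ≤ N / 2 ^ k + 1 := by
      have hinj : Set.InjOn (fun n => n / 2 ^ k)
          ↑((Finset.range N).filter fun n => n % 2 ^ k = 2 ^ k - 1) := by
        intro x hx y hy hxy
        simp only [Finset.coe_filter, Set.mem_setOf_eq, Finset.mem_range] at hx hy
        have hx2 := Nat.div_add_mod x (2 ^ k)
        have hy2 := Nat.div_add_mod y (2 ^ k)
        simp only at hxy
        rw [hxy] at hx2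
        omega
      have hmaps : ∀ n ∈ (Finset.range N).filter fun n => n % 2 ^ k = 2 ^ k - 1,
          n / 2 ^ k ∈ Finset.range (N / 2 ^ k + 1) := by
        intro n hn
        simp only [Finset.mem_filter, Finset.mem_range] at hn ⊢
        have := Nat.div_le_div_right (c := 2 ^ k) (Nat.le_of_lt_succ (Nat.lt_succ_of_lt hn.1))
        have := Nat.div_le_div_right (c := 2 ^ k) hn.1.le
        omega
      simpa using Finset.card_le_card_of_injOn _ hmaps hinj
    calc (cnt 1 (-(k : ℤ)) N : ℝ) ≤ ((N / 2 ^ k + 1 : ℕ) : ℝ) := by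
          exact Nat.cast_le.mpr (le_trans (Finset.card_le_card hsub) hcard)
      _ ≤ (N : ℝ) / 2 ^ k + 1 := by
          push_cast
          have := Nat.cast_div_le (α := ℝ) (m := N) (n := 2 ^ k)
          push_cast at this
          linarith
  have hbound : ∀ N : ℕ, 1 ≤ N → densSeq 1 (-(k : ℤ)) N ≤ 1 / 2 ^ k + 1 / N := by
    intro N hN
    rw [densSeq_eq]
    have hN' : (0 : ℝ) < N := by positivity
    rw [div_le_iff₀ hN']
    calc (cnt 1 (-(k : ℤ)) N : ℝ) ≤ (N : ℝ) / 2 ^ k + 1 := key N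
      _ = (1 / 2 ^ k + 1 / N) * N := by field_simp
  have hlim : Tendsto (fun N : ℕ => 1 / (2 : ℝ) ^ k + 1 / N) atTop (nhds (1 / 2 ^ k)) := by
    have := tendsto_one_div_atTop_nhds_zero_nat (𝕜 := ℝ)
    simpa using (tendsto_const_nhds (x := 1 / (2:ℝ) ^ k)).add this
  have := le_of_tendsto_of_tendsto (hμ 1 (-(k : ℤ))) hlim
    (by filter_upwards [eventually_ge_atTop 1] with N hN; exact hbound N hN)
  calc μ 1 (-(k:ℤ)) ≤ 1 / 2 ^ k := this
    _ = (1 / 2) ^ k := by rw [div_pow, one_pow]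

end Mu

section Mu2
variable {μ : ℕ → ℤ → ℝ} (hμ : ∀ a d, Tendsto (densSeq a d) atTop (nhds (μ a d)))
include hμ

lemma summ_poly {a : ℕ} (h : Summable fun d : ℤ => (1 + (d : ℝ) ^ 2) * μ a d)
    (g : ℤ → ℝ) (C : ℝ) (hg : ∀ d, |g d| ≤ C * (1 + (d : ℝ) ^ 2)) :
    Summable (fun d : ℤ => g d * μ a d) := by
  refine Summable.of_norm_bounded (h.mul_left C) fun d => ?_
  rw [Real.norm_eq_abs, abs_mul, abs_of_nonneg (mu_nonneg hμ a d)]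
  calc |g d| * μ a d ≤ C * (1 + (d : ℝ) ^ 2) * μ a d :=
        mul_le_mul_of_nonneg_right (hg d) (mu_nonneg hμ a d)
    _ = C * ((1 + (d : ℝ) ^ 2) * μ a d) := by ring

lemma summ_shift {a : ℕ} (c : ℤ) (g : ℤ → ℝ)
    (h : Summable fun d : ℤ => g (d + c) * μ a d) :
    Summable (fun d : ℤ => g d * μ a (d - c)) := by
  have := (Equiv.summable_iff (Equiv.addRight c)
    (f := fun d : ℤ => g d * μ a (d - c))).mp ?_
  · exact this
  · refine h.congr fun d => ?_
    simp [Equiv.coe_addRight]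

lemma tsum_shift (c : ℤ) (g : ℤ → ℝ) (a : ℕ) :
    ∑' d : ℤ, g d * μ a (d - c) = ∑' d : ℤ, g (d + c) * μ a d := by
  rw [← (Equiv.addRight c).tsum_eq (fun d : ℤ => g d * μ a (d - c))]
  refine tsum_congr fun d => ?_
  simp [Equiv.coe_addRight]

/-- master summability -/
lemma muSumm : ∀ a : ℕ, Summable fun d : ℤ => (1 + (d : ℝ) ^ 2) * μ a d := by
  have base0 : Summable fun d : ℤ => (1 + (d : ℝ) ^ 2) * μ 0 d := by
    refine summable_of_ne_finset_zero (s := {0}) fun d hd => ?_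
    have : μ 0 d = 0 := by
      rw [mu_zero hμ]
      simp only [Finset.mem_singleton] at hd
      simp [hd]
    simp [this]
  have base1 : Summable fun d : ℤ => (1 + (d : ℝ) ^ 2) * μ 1 d := by
    apply Summable.of_nat_of_neg
    · refine summable_of_ne_finset_zero (s := {0, 1}) fun n hn => ?_
      have hn2 : (2 : ℤ) ≤ (n : ℤ) := by
        simp only [Finset.mem_insert, Finset.mem_singleton] at hn
        omega
      simp [mu_one_eq_zero hμ _ hn2]
    · have hsum : Summable fun n : ℕ => (1 + (n : ℝ) ^ 2) * (1 / 2) ^ n := by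
        have h1 : Summable fun n : ℕ => ((1 : ℝ) / 2) ^ n :=
          summable_geometric_of_lt_one (by norm_num) (by norm_num)
        have h2 : Summable fun n : ℕ => (n : ℝ) ^ 2 * (1 / 2) ^ n := by
          simpa using summable_pow_mul_geometric_of_norm_lt_one (R := ℝ) 2
            (r := 1 / 2) (by rw [Real.norm_eq_abs, abs_of_pos (by norm_num : (0:ℝ) < 1/2)]; norm_num)
        refine (h1.add h2).congr fun n => ?_
        ring
      refine Summable.of_nonneg_of_le (fun n => ?_) (fun n => ?_) hsum
      · have h1 : (0 : ℝ) ≤ 1 + ((-n : ℤ) : ℝ) ^ 2 := by positivity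
        exact mul_nonneg h1 (mu_nonneg hμ 1 _)
      · have h2 : μ 1 (-(n : ℤ)) ≤ (1 / 2 : ℝ) ^ n := mu_one_tail hμ n
        have h3 : (1 + ((-n : ℤ) : ℝ) ^ 2) = 1 + (n : ℝ) ^ 2 := by push_cast; ring
        rw [h3]
        exact mul_le_mul_of_nonneg_left h2 (by positivity)
  intro a
  induction a using Nat.strong_induction_on with
  | _ a ih =>
    match a, ih with
    | 0, _ => exact base0
    | 1, _ => exact base1
    | (n + 2), ih =>
      rcases Nat.even_or_odd (n + 2) with ⟨b, hb⟩ | ⟨b, hb⟩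
      · have hb' : n + 2 = 2 * b := by omega
        rw [hb']
        have := ih b (by omega)
        refine this.congr fun d => ?_
        rw [mu_two_mul hμ]
      · have hb' : n + 2 = 2 * b + 1 := by omega
        have hb1 : 1 ≤ b := by omega
        rw [hb']
        have Sb := ih b (by omega)
        have Sb1 := ih (b + 1) (by omega)
        have hA : Summable fun d : ℤ => (1 + (d : ℝ) ^ 2) * ((1 / 2) * μ b (d - 1)) := by
          have : Summable fun d : ℤ => ((fun x : ℤ => 1 + (x : ℝ) ^ 2) (d + 1) * (1 / 2)) * μ b d := by
            refine summ_poly hμ Sb _ 3 fun d => ?_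
            have : ((1 + ((d : ℝ) + 1) ^ 2) * (1 / 2)) ≤ 3 * (1 + (d : ℝ) ^ 2) := by
              nlinarith [sq_nonneg ((d : ℝ) - 1)]
            rw [abs_of_nonneg (by positivity)]
            push_cast
            linarith
          have h2 := summ_shift hμ (a := b) 1 (fun x : ℤ => (1 + (x : ℝ) ^ 2) * (1 / 2)) ?_
          · refine h2.congr fun d => ?_; ring
          · refine this.congr fun d => ?_; push_cast; ring
        have hB : Summable fun d : ℤ => (1 + (d : ℝ) ^ 2) * ((1 / 2) * μ (b + 1) (d + 1)) := by
          have : Summable fun d : ℤ => ((fun x : ℤ => 1 + (x : ℝ) ^ 2) (d + -1) * (1 / 2)) * μ (b + 1) d := by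
            refine summ_poly hμ Sb1 _ 3 fun d => ?_
            have : ((1 + ((d : ℝ) - 1) ^ 2) * (1 / 2)) ≤ 3 * (1 + (d : ℝ) ^ 2) := by
              nlinarith [sq_nonneg ((d : ℝ) + 1)]
            rw [abs_of_nonneg (by positivity)]
            push_cast
            linarith
          have h2 := summ_shift hμ (a := b + 1) (-1) (fun x : ℤ => (1 + (x : ℝ) ^ 2) * (1 / 2)) ?_
          · refine h2.congr fun d => ?_
            have : d - (-1) = d + 1 := by ring
            rw [this]; ring
          · exact this
        refine (hA.add hB).congr fun d => ?_
        rw [mu_odd hμ]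
        ring

lemma summ_g (a : ℕ) (g : ℤ → ℝ) (C : ℝ) (hg : ∀ d, |g d| ≤ C * (1 + (d : ℝ) ^ 2)) :
    Summable (fun d : ℤ => g d * μ a d) :=
  summ_poly hμ (muSumm hμ a) g C hg

lemma summ_S0 (a : ℕ) : Summable (μ a) := by
  have := summ_g hμ a (fun _ => 1) 1 (fun d => by
    rw [abs_one]; nlinarith [sq_nonneg (d : ℝ)])
  simpa using this

lemma summ_S1 (a : ℕ) : Summable (fun d : ℤ => (d : ℝ) * μ a d) :=
  summ_g hμ a _ 1 (fun d => by
    nlinarith [sq_abs ((d : ℝ)), abs_nonneg ((d : ℝ)), sq_nonneg (|(d : ℝ)| - 1)])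

lemma summ_S2 (a : ℕ) : Summable (fun d : ℤ => (d : ℝ) ^ 2 * μ a d) :=
  summ_g hμ a _ 1 (fun d => by
    rw [abs_of_nonneg (sq_nonneg _)]
    nlinarith [sq_nonneg (d : ℝ)])

end Mu2
section Mu3
variable {μ : ℕ → ℤ → ℝ} (hμ : ∀ a d, Tendsto (densSeq a d) atTop (nhds (μ a d)))
include hμ

lemma tsum_odd_g (g : ℤ → ℝ) (b : ℕ)
    (hA : Summable fun d : ℤ => g (d + 1) * μ b d)
    (hB : Summable fun d : ℤ => g (d - 1) * μ (b + 1) d) :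
    ∑' d : ℤ, g d * μ (2 * b + 1) d
      = (1 / 2) * ∑' d : ℤ, g (d + 1) * μ b d
        + (1 / 2) * ∑' d : ℤ, g (d - 1) * μ (b + 1) d := by
  have e1 : ∀ d : ℤ, g d * μ (2 * b + 1) d
      = (fun x : ℤ => g x * (1 / 2)) d * μ b (d - 1)
        + (fun x : ℤ => g x * (1 / 2)) d * μ (b + 1) (d - (-1)) := by
    intro d
    rw [mu_odd hμ]
    have : d - (-1) = d + 1 := by ring
    rw [this]
    ring
  have SA : Summable fun d : ℤ => (fun x : ℤ => g x * (1 / 2)) d * μ b (d - 1) := by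
    refine summ_shift hμ 1 _ ?_
    refine (hA.mul_left (1 / 2)).congr fun d => ?_
    beta_reduce
    ring
  have SB : Summable fun d : ℤ => (fun x : ℤ => g x * (1 / 2)) d * μ (b + 1) (d - (-1)) := by
    refine summ_shift hμ (-1) _ ?_
    refine (hB.mul_left (1 / 2)).congr fun d => ?_
    beta_reduce
    have : d + -1 = d - 1 := by ring
    rw [this]
    ring
  rw [tsum_congr e1, Summable.tsum_add SA SB, tsum_shift hμ 1, tsum_shift hμ (-1)]
  have r1 : ∑' d : ℤ, (fun x : ℤ => g x * (1 / 2)) (d + 1) * μ b d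
      = (1 / 2) * ∑' d : ℤ, g (d + 1) * μ b d := by
    rw [← tsum_mul_left]
    refine tsum_congr fun d => ?_
    beta_reduce
    ring
  have r2 : ∑' d : ℤ, (fun x : ℤ => g x * (1 / 2)) (d + -1) * μ (b + 1) d
      = (1 / 2) * ∑' d : ℤ, g (d - 1) * μ (b + 1) d := by
    rw [← tsum_mul_left]
    refine tsum_congr fun d => ?_
    beta_reduce
    have : d + -1 = d - 1 := by ring
    rw [this]
    ring
  rw [r1, r2]

lemma summ_gp1 (a : ℕ) : Summable fun d : ℤ => ((d : ℝ) + 1) * μ a d :=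
  summ_g hμ a _ 2 (fun d => by
    have h1 : |(d : ℝ) + 1| ≤ |(d : ℝ)| + 1 := by
      calc |(d : ℝ) + 1| ≤ |(d : ℝ)| + |(1 : ℝ)| := abs_add_le _ _
        _ = |(d : ℝ)| + 1 := by rw [abs_one]
    nlinarith [sq_abs ((d : ℝ)), abs_nonneg ((d : ℝ)), sq_nonneg (|(d : ℝ)| - 1)])

lemma summ_gm1 (a : ℕ) : Summable fun d : ℤ => ((d : ℝ) - 1) * μ a d :=
  summ_g hμ a _ 2 (fun d => by
    have h1 : |(d : ℝ) - 1| ≤ |(d : ℝ)| + 1 := by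
      calc |(d : ℝ) - 1| ≤ |(d : ℝ)| + |(-1 : ℝ)| := by
            have := abs_add_le (d : ℝ) (-1); rw [← sub_eq_add_neg] at this; exact this
        _ = |(d : ℝ)| + 1 := by norm_num
    nlinarith [sq_abs ((d : ℝ)), abs_nonneg ((d : ℝ)), sq_nonneg (|(d : ℝ)| - 1)])

lemma summ_gsq1 (a : ℕ) (c : ℝ) (hc : |c| ≤ 1) : Summable fun d : ℤ => ((d : ℝ) + c) ^ 2 * μ a d :=
  summ_g hμ a _ 4 (fun d => by
    rw [abs_of_nonneg (sq_nonneg _)]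
    have := abs_nonneg c
    nlinarith [sq_abs ((d : ℝ)), abs_nonneg ((d : ℝ)), sq_nonneg (|(d : ℝ)| - 1),
      sq_abs c, mul_le_mul_of_nonneg_left hc (abs_nonneg ((d : ℝ))),
      abs_mul ((d : ℝ)) c, neg_abs_le ((d : ℝ) * c), le_abs_self ((d : ℝ) * c)])

lemma tsum_p1 (a : ℕ) : ∑' d : ℤ, ((d : ℝ) + 1) * μ a d
    = (∑' d : ℤ, (d : ℝ) * μ a d) + ∑' d : ℤ, μ a d := by
  rw [← Summable.tsum_add (summ_S1 hμ a) (summ_S0 hμ a)]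
  refine tsum_congr fun d => ?_
  ring

lemma tsum_m1' (a : ℕ) : ∑' d : ℤ, ((d : ℝ) - 1) * μ a d
    = (∑' d : ℤ, (d : ℝ) * μ a d) - ∑' d : ℤ, μ a d := by
  have : ∑' d : ℤ, ((d : ℝ) - 1) * μ a d
      = ∑' d : ℤ, ((d : ℝ) * μ a d + (-1) * μ a d) := by
    refine tsum_congr fun d => ?_
    ring
  rw [this, Summable.tsum_add (summ_S1 hμ a) ((summ_S0 hμ a).mul_left (-1)), tsum_mul_left]
  ring

lemma mass_m1 : ∀ a : ℕ, (∑' d : ℤ, μ a d) = 1 ∧ (∑' d : ℤ, (d : ℝ) * μ a d) = 0 := by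
  have mass0 : (∑' d : ℤ, μ 0 d) = 1 := by
    rw [tsum_congr (fun d => mu_zero hμ d)]
    exact tsum_ite_eq 0 1
  have m10 : (∑' d : ℤ, (d : ℝ) * μ 0 d) = 0 := by
    have : ∀ d : ℤ, (d : ℝ) * μ 0 d = 0 := by
      intro d
      rw [mu_zero hμ]
      by_cases h : d = 0 <;> simp [h]
    rw [tsum_congr this, tsum_zero]
  -- generic odd-step equations
  have oddMass : ∀ b : ℕ, (∑' d : ℤ, μ (2 * b + 1) d)
      = (1 / 2) * (∑' d : ℤ, μ b d) + (1 / 2) * (∑' d : ℤ, μ (b + 1) d) := by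
    intro b
    have h := tsum_odd_g hμ (fun _ => 1) b
      ((summ_S0 hμ b).congr fun d => (one_mul _).symm)
      ((summ_S0 hμ (b + 1)).congr fun d => (one_mul _).symm)
    simpa using h
  have oddM1 : ∀ b : ℕ, (∑' d : ℤ, (d : ℝ) * μ (2 * b + 1) d)
      = (1 / 2) * ((∑' d : ℤ, (d : ℝ) * μ b d) + ∑' d : ℤ, μ b d)
        + (1 / 2) * ((∑' d : ℤ, (d : ℝ) * μ (b + 1) d) - ∑' d : ℤ, μ (b + 1) d) := by
    intro b
    have h := tsum_odd_g hμ (fun x : ℤ => (x : ℝ)) b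
      (by exact_mod_cast summ_gp1 hμ b) (by exact_mod_cast summ_gm1 hμ (b + 1))
    rw [← tsum_p1 hμ b, ← tsum_m1' hμ (b + 1)]
    have e1 : ∑' d : ℤ, (((d : ℤ) + 1 : ℤ) : ℝ) * μ b d = ∑' d : ℤ, ((d : ℝ) + 1) * μ b d := by
      refine tsum_congr fun d => ?_; push_cast; ring
    have e2 : ∑' d : ℤ, (((d : ℤ) - 1 : ℤ) : ℝ) * μ (b + 1) d
        = ∑' d : ℤ, ((d : ℝ) - 1) * μ (b + 1) d := by
      refine tsum_congr fun d => ?_; push_cast; ring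
    rw [e1, e2] at h
    exact h
  -- strong induction
  intro a
  induction a using Nat.strong_induction_on with
  | _ a ih =>
    match a, ih with
    | 0, _ => exact ⟨mass0, m10⟩
    | 1, _ =>
      have h1 := oddMass 0
      have h2 := oddM1 0
      norm_num at h1 h2
      rw [mass0] at h1
      have mass1 : (∑' d : ℤ, μ 1 d) = 1 := by linarith
      rw [mass0, m10, mass1] at h2
      exact ⟨mass1, by linarith⟩
    | (n + 2), ih =>
      rcases Nat.even_or_odd (n + 2) with ⟨b, hb⟩ | ⟨b, hb⟩
      · have hb' : n + 2 = 2 * b := by omega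
        have hB := ih b (by omega)
        rw [hb']
        constructor
        · rw [tsum_congr (fun d => mu_two_mul hμ b d)]; exact hB.1
        · rw [tsum_congr (fun d => by rw [mu_two_mul hμ b d] :
            ∀ d : ℤ, (d : ℝ) * μ (2 * b) d = (d : ℝ) * μ b d)]
          exact hB.2
      · have hb' : n + 2 = 2 * b + 1 := by omega
        have hb1 : 1 ≤ b := by omega
        have hB := ih b (by omega)
        have hB1 := ih (b + 1) (by omega)
        rw [hb']
        constructor
        · rw [oddMass b, hB.1, hB1.1]; norm_num
        · rw [oddM1 b, hB.1, hB1.1, hB.2, hB1.2]; norm_num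

lemma tsum_sq_shift (a : ℕ) (c : ℝ) (hc : |c| ≤ 1) : ∑' d : ℤ, ((d : ℝ) + c) ^ 2 * μ a d
    = (∑' d : ℤ, (d : ℝ) ^ 2 * μ a d) + 2 * c * (∑' d : ℤ, (d : ℝ) * μ a d)
      + c ^ 2 * (∑' d : ℤ, μ a d) := by
  have e : ∀ d : ℤ, ((d : ℝ) + c) ^ 2 * μ a d
      = (d : ℝ) ^ 2 * μ a d + ((2 * c) * ((d : ℝ) * μ a d) + c ^ 2 * μ a d) := by
    intro d; ring
  rw [tsum_congr e, Summable.tsum_add (summ_S2 hμ a)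
    (((summ_S1 hμ a).mul_left (2 * c)).add ((summ_S0 hμ a).mul_left (c ^ 2))),
    Summable.tsum_add ((summ_S1 hμ a).mul_left (2 * c)) ((summ_S0 hμ a).mul_left (c ^ 2)),
    tsum_mul_left, tsum_mul_left]
  ring

lemma var_rec_even (b : ℕ) : ∑' d : ℤ, (d : ℝ) ^ 2 * μ (2 * b) d
    = ∑' d : ℤ, (d : ℝ) ^ 2 * μ b d := by
  refine tsum_congr fun d => ?_
  rw [mu_two_mul hμ]

lemma var_rec_odd (b : ℕ) : ∑' d : ℤ, (d : ℝ) ^ 2 * μ (2 * b + 1) d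
    = (1 / 2) * (∑' d : ℤ, (d : ℝ) ^ 2 * μ b d)
      + (1 / 2) * (∑' d : ℤ, (d : ℝ) ^ 2 * μ (b + 1) d) + 1 := by
  have h := tsum_odd_g hμ (fun x : ℤ => (x : ℝ) ^ 2) b ?_ ?_
  · have e1 : ∑' d : ℤ, (((d : ℤ) + 1 : ℤ) : ℝ) ^ 2 * μ b d
        = ∑' d : ℤ, ((d : ℝ) + 1) ^ 2 * μ b d := by
      refine tsum_congr fun d => ?_; push_cast; ring
    have e2 : ∑' d : ℤ, (((d : ℤ) - 1 : ℤ) : ℝ) ^ 2 * μ (b + 1) d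
        = ∑' d : ℤ, ((d : ℝ) + (-1)) ^ 2 * μ (b + 1) d := by
      refine tsum_congr fun d => ?_; push_cast; ring
    rw [e1, e2] at h
    rw [h, tsum_sq_shift hμ b 1 (by norm_num), tsum_sq_shift hμ (b + 1) (-1) (by norm_num),
      (mass_m1 hμ b).1, (mass_m1 hμ b).2, (mass_m1 hμ (b + 1)).1, (mass_m1 hμ (b + 1)).2]
    ring
  · have := summ_gsq1 hμ b 1 (by norm_num)
    refine this.congr fun d => ?_
    push_cast; ring
  · have := summ_gsq1 hμ (b + 1) (-1) (by norm_num)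
    refine this.congr fun d => ?_
    push_cast; ring

lemma var_zero' : ∑' d : ℤ, (d : ℝ) ^ 2 * μ 0 d = 0 := by
  have : ∀ d : ℤ, (d : ℝ) ^ 2 * μ 0 d = 0 := by
    intro d
    rw [mu_zero hμ]
    by_cases h : d = 0 <;> simp [h]
  rw [tsum_congr this, tsum_zero]

lemma var_one' : ∑' d : ℤ, (d : ℝ) ^ 2 * μ 1 d = 2 := by
  have h := var_rec_odd hμ 0
  norm_num at h
  rw [var_zero' hμ] at h
  linarith

end Mu3
noncomputable def stepP (ε : ℕ) (w : ℝ × ℝ) : ℝ × ℝ :=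
  if ε = 0 then (w.1, (w.1 + w.2) / 2 + 1) else ((w.1 + w.2) / 2 + 1, w.2)

lemma pair_foldr (V : ℕ → ℝ) (hV0 : V 0 = 0) (hV1 : V 1 = 2)
    (hVe : ∀ b, V (2 * b) = V b)
    (hVo : ∀ b, V (2 * b + 1) = (V b + V (b + 1)) / 2 + 1) :
    ∀ L : List ℕ, (∀ x ∈ L, x ≤ 1) →
      (V (Nat.ofDigits 2 L), V (Nat.ofDigits 2 L + 1)) = L.foldr stepP (0, 2) := by
  intro L
  induction L with
  | nil => intro _; simp [Nat.ofDigits_nil, hV0, hV1]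
  | cons ε L ih =>
    intro hx
    have hL : ∀ x ∈ L, x ≤ 1 := fun x hxL => hx x (List.mem_cons_of_mem _ hxL)
    have hε : ε ≤ 1 := hx ε List.mem_cons_self
    have hih := ih hL
    set m := Nat.ofDigits 2 L with hm
    have hco : Nat.ofDigits 2 (ε :: L) = ε + 2 * m := by
      rw [Nat.ofDigits_cons]
    rw [List.foldr_cons, ← hih]
    interval_cases ε
    · simp only [hco, stepP, if_pos rfl]
      have e1 : 0 + 2 * m = 2 * m := by ring
      rw [e1, hVe m, hVo m]
      simp
    · simp only [hco, stepP]
      have e1 : 1 + 2 * m = 2 * m + 1 := by ring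
      have e2 : 2 * m + 1 + 1 = 2 * (m + 1) := by ring
      rw [e1, e2, hVe (m + 1), hVo m]
      simp

noncomputable def pseq (x : ℕ → ℕ) : ℕ → ℝ
  | 0 => 1
  | j + 1 => (pseq x j + 1 - x j) / 2

noncomputable def qseq (x : ℕ → ℕ) (j : ℕ) : ℝ :=
  (x j : ℝ) * pseq x j + (1 - (x j : ℝ)) * (1 - pseq x j)

lemma pseq_mem (x : ℕ → ℕ) (hx : ∀ j, x j ≤ 1) (j : ℕ) : 0 ≤ pseq x j ∧ pseq x j ≤ 1 := by
  induction j with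
  | zero => norm_num [pseq]
  | succ j ih =>
    have := hx j
    have hxj : (x j : ℝ) ≤ 1 := by exact_mod_cast this
    have hxj0 : (0 : ℝ) ≤ x j := Nat.cast_nonneg _
    constructor
    · simp only [pseq]
      nlinarith [ih.1, ih.2]
    · simp only [pseq]
      nlinarith [ih.1, ih.2]

lemma foldr_eval (x : ℕ → ℕ) (hx : ∀ j, x j ≤ 1) :
    ∀ n : ℕ, ∀ z : ℝ × ℝ,
      ((List.ofFn fun k : Fin (n + 1) => x k).foldr stepP z).1
        = (∑ j ∈ Finset.range (n + 1), qseq x j)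
          + pseq x (n + 1) * z.1 + (1 - pseq x (n + 1)) * z.2 := by
  intro n
  induction n with
  | zero =>
    intro z
    have h0 : x 0 = 0 ∨ x 0 = 1 := by have := hx 0; omega
    simp only [List.ofFn_succ, List.ofFn_zero, List.foldr_cons, List.foldr_nil,
      Fin.val_zero, Nat.zero_add, Finset.sum_range_one]
    have hp : pseq x 1 = (1 + 1 - (x 0 : ℝ)) / 2 := rfl
    have hq : qseq x 0 = (x 0 : ℝ) * pseq x 0 + (1 - (x 0 : ℝ)) * (1 - pseq x 0) := rfl
    have hp0 : pseq x 0 = 1 := rfl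
    rcases h0 with h | h <;>
      rw [hq, hp, hp0, h] <;>
      simp only [stepP, h] <;>
      norm_num <;> simp [h] <;> ring
  | succ n ih =>
    intro z
    have hsnoc : (List.ofFn fun k : Fin (n + 2) => x k)
        = (List.ofFn fun k : Fin (n + 1) => x k) ++ [x (n + 1)] := by
      rw [List.ofFn_succ']
      simp [Fin.last]
    rw [hsnoc, List.foldr_append, List.foldr_cons, List.foldr_nil, ih (stepP (x (n + 1)) z)]
    conv_rhs => rw [Finset.sum_range_succ]
    have hp : pseq x (n + 1 + 1) = (pseq x (n + 1) + 1 - (x (n + 1) : ℝ)) / 2 := rfl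
    have hq : qseq x (n + 1)
        = (x (n + 1) : ℝ) * pseq x (n + 1) + (1 - (x (n + 1) : ℝ)) * (1 - pseq x (n + 1)) := rfl
    have h01 : x (n + 1) = 0 ∨ x (n + 1) = 1 := by have := hx (n + 1); omega
    rcases h01 with h | h <;>
      rw [hq, hp, h] <;>
      simp only [stepP, h] <;>
      norm_num <;> (try simp [h]) <;> (try ring) <;> (try push_cast) <;> (try ring)

lemma pseq_closed (x : ℕ → ℕ) (j : ℕ) :
    pseq x j = 1 / 2 + (1 / 2) ^ (j + 1)
      - ∑ m ∈ Finset.range j, (2 * (x m : ℝ) - 1) * (1 / 2) ^ (j - m + 1) := by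
  induction j with
  | zero => norm_num [pseq]
  | succ j ih =>
    have step : pseq x (j + 1) = (pseq x j + 1 - x j) / 2 := rfl
    rw [step, ih, Finset.sum_range_succ]
    have e1 : ∀ m ∈ Finset.range j,
        (2 * (x m : ℝ) - 1) * (1 / 2) ^ (j + 1 - m + 1)
          = (1 / 2) * ((2 * (x m : ℝ) - 1) * (1 / 2) ^ (j - m + 1)) := by
      intro m hm
      have hmj : m < j := Finset.mem_range.1 hm
      have : j + 1 - m + 1 = (j - m + 1) + 1 := by omega
      rw [this, pow_succ]
      ring
    rw [Finset.sum_congr rfl e1, ← Finset.mul_sum]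
    have e2 : j + 1 - j + 1 = 2 := by omega
    rw [e2]
    have e3 : (1 / 2 : ℝ) ^ (j + 1 + 1) = (1 / 2) * (1 / 2) ^ (j + 1) := by
      rw [pow_succ]; ring
    rw [e3]
    ring

lemma qseq_dev (x : ℕ → ℕ) (hx : ∀ j, x j ≤ 1) (j : ℕ) :
    qseq x j - 1 / 2 = (2 * (x j : ℝ) - 1) * (pseq x j - 1 / 2) := by
  have := hx j
  interval_cases h : x j <;> simp [qseq, h] <;> ring

/-- reindexing of the double sum over pairs m < j ≤ n by the gap i = j - m -/
lemma double_sum_reindex (F : ℕ → ℕ → ℝ) (n : ℕ) :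
    ∑ j ∈ Finset.range (n + 1), ∑ m ∈ Finset.range j, F j m
      = ∑ i ∈ Finset.Icc 1 n, ∑ m ∈ Finset.range (n + 1 - i), F (m + i) m := by
  rw [Finset.sum_sigma', Finset.sum_sigma']
  refine Finset.sum_nbij' (fun p => ⟨p.1 - p.2, p.2⟩) (fun p => ⟨p.2 + p.1, p.2⟩) ?_ ?_ ?_ ?_ ?_
  · intro a ha
    simp only [Finset.mem_sigma, Finset.mem_range, Finset.mem_Icc] at ha ⊢
    omega
  · intro a ha
    simp only [Finset.mem_sigma, Finset.mem_range, Finset.mem_Icc] at ha ⊢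
    omega
  · rintro ⟨a1, a2⟩ ha
    simp only [Finset.mem_sigma, Finset.mem_range] at ha
    have h1 : a2 + (a1 - a2) = a1 := by omega
    simp [h1]
  · rintro ⟨a1, a2⟩ ha
    simp only [Finset.mem_sigma, Finset.mem_Icc, Finset.mem_range] at ha
    have h1 : a2 + a1 - a2 = a1 := by omega
    simp [h1]
  · rintro ⟨a1, a2⟩ ha
    simp only [Finset.mem_sigma, Finset.mem_range] at ha
    have h1 : a2 + (a1 - a2) = a1 := by omega
    simp only
    rw [h1]
lemma geom_tail_le (n : ℕ) : ∑ j ∈ Finset.range n, (1 / 2 : ℝ) ^ (j + 1) ≤ 1 := by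
  have h1 : ∑ j ∈ Finset.range n, (1 / 2 : ℝ) ^ (j + 1)
      = (1 / 2) * ∑ j ∈ Finset.range n, (1 / 2 : ℝ) ^ j := by
    rw [Finset.mul_sum]
    refine Finset.sum_congr rfl fun j _ => ?_
    rw [pow_succ]
    ring
  have h2 : ∑ j ∈ Finset.range n, (1 / 2 : ℝ) ^ j = ((1/2 : ℝ) ^ n - 1) / (1/2 - 1) :=
    geom_sum_eq (by norm_num) n
  have h3 : (0 : ℝ) ≤ (1/2 : ℝ) ^ n := by positivity
  have h4 : (1/2 : ℝ) ^ n ≤ 1 := pow_le_one₀ (by norm_num) (by norm_num)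
  have h5 : ((1/2 : ℝ) ^ n - 1) / (1/2 - 1) = 2 * (1 - (1/2 : ℝ) ^ n) := by
    field_simp
    ring
  rw [h1, h2, h5]
  nlinarith

lemma qsum_bound (x : ℕ → ℕ) (hx : ∀ j, x j ≤ 1) (n : ℕ) :
    |(∑ j ∈ Finset.range (n + 1), qseq x j) - (n + 1) / 2|
      ≤ 1 + ∑ i ∈ Finset.Icc 1 n, (1 / 2 : ℝ) ^ (i + 1)
          * |∑ m ∈ Finset.range (n + 1 - i), (2 * (x (m + i) : ℝ) - 1) * (2 * (x m : ℝ) - 1)| := by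
  set b : ℕ → ℝ := fun j => 2 * (x j : ℝ) - 1 with hb
  have hbabs : ∀ j, |b j| ≤ 1 := by
    intro j
    have := hx j
    have h01 : x j = 0 ∨ x j = 1 := by omega
    rcases h01 with h | h <;> simp [hb, h] <;> norm_num
  have key : (∑ j ∈ Finset.range (n + 1), qseq x j) - (n + 1) / 2
      = (∑ j ∈ Finset.range (n + 1), b j * (1 / 2) ^ (j + 1))
        - ∑ i ∈ Finset.Icc 1 n, (1 / 2 : ℝ) ^ (i + 1)
            * ∑ m ∈ Finset.range (n + 1 - i), b (m + i) * b m := by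
    have e1 : (∑ j ∈ Finset.range (n + 1), qseq x j) - (n + 1) / 2
        = ∑ j ∈ Finset.range (n + 1), (qseq x j - 1 / 2) := by
      rw [Finset.sum_sub_distrib, Finset.sum_const, Finset.card_range]
      push_cast
      ring
    have e2 : ∀ j ∈ Finset.range (n + 1), qseq x j - 1 / 2
        = b j * (1 / 2) ^ (j + 1)
          - ∑ m ∈ Finset.range j, (b j * b m) * (1 / 2 : ℝ) ^ (j - m + 1) := by
      intro j _
      rw [qseq_dev x hx j, pseq_closed x j]
      simp only [hb]
      have key2 : (2 * (x j : ℝ) - 1) * (1 / 2 + (1 / 2) ^ (j + 1)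
            - (∑ m ∈ Finset.range j, (2 * (x m : ℝ) - 1) * (1 / 2) ^ (j - m + 1)) - 1 / 2)
          = (2 * (x j : ℝ) - 1) * (1 / 2) ^ (j + 1)
            - (2 * (x j : ℝ) - 1)
              * ∑ m ∈ Finset.range j, (2 * (x m : ℝ) - 1) * (1 / 2) ^ (j - m + 1) := by
        ring
      rw [key2, Finset.mul_sum]
      congr 1
      refine Finset.sum_congr rfl fun m _ => ?_
      ring
    rw [e1, Finset.sum_congr rfl e2, Finset.sum_sub_distrib]
    congr 1
    rw [double_sum_reindex (fun j m => (b j * b m) * (1 / 2 : ℝ) ^ (j - m + 1)) n]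
    refine Finset.sum_congr rfl fun i hi => ?_
    rw [Finset.mul_sum]
    refine Finset.sum_congr rfl fun m _ => ?_
    have : m + i - m + 1 = i + 1 := by omega
    rw [this]
    ring
  rw [key]
  have h1 : |∑ j ∈ Finset.range (n + 1), b j * (1 / 2 : ℝ) ^ (j + 1)| ≤ 1 := by
    calc |∑ j ∈ Finset.range (n + 1), b j * (1 / 2 : ℝ) ^ (j + 1)|
        ≤ ∑ j ∈ Finset.range (n + 1), |b j * (1 / 2 : ℝ) ^ (j + 1)| :=
          Finset.abs_sum_le_sum_abs _ _
      _ ≤ ∑ j ∈ Finset.range (n + 1), (1 / 2 : ℝ) ^ (j + 1) := by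
          refine Finset.sum_le_sum fun j _ => ?_
          rw [abs_mul, abs_of_nonneg (by positivity : (0:ℝ) ≤ (1/2:ℝ)^(j+1))]
          exact mul_le_of_le_one_left (by positivity) (hbabs j)
      _ ≤ 1 := geom_tail_le (n + 1)
  have h2 : |∑ i ∈ Finset.Icc 1 n, (1 / 2 : ℝ) ^ (i + 1)
      * ∑ m ∈ Finset.range (n + 1 - i), b (m + i) * b m|
      ≤ ∑ i ∈ Finset.Icc 1 n, (1 / 2 : ℝ) ^ (i + 1)
          * |∑ m ∈ Finset.range (n + 1 - i), b (m + i) * b m| := by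
    calc _ ≤ ∑ i ∈ Finset.Icc 1 n, |(1 / 2 : ℝ) ^ (i + 1)
        * ∑ m ∈ Finset.range (n + 1 - i), b (m + i) * b m| := Finset.abs_sum_le_sum_abs _ _
      _ = ∑ i ∈ Finset.Icc 1 n, (1 / 2 : ℝ) ^ (i + 1)
          * |∑ m ∈ Finset.range (n + 1 - i), b (m + i) * b m| := by
          refine Finset.sum_congr rfl fun i _ => ?_
          rw [abs_mul, abs_of_nonneg (by positivity : (0:ℝ) ≤ (1/2:ℝ)^(i+1))]
  calc |(∑ j ∈ Finset.range (n + 1), b j * (1 / 2 : ℝ) ^ (j + 1))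
      - ∑ i ∈ Finset.Icc 1 n, (1 / 2 : ℝ) ^ (i + 1)
          * ∑ m ∈ Finset.range (n + 1 - i), b (m + i) * b m|
      ≤ |∑ j ∈ Finset.range (n + 1), b j * (1 / 2 : ℝ) ^ (j + 1)|
        + |∑ i ∈ Finset.Icc 1 n, (1 / 2 : ℝ) ^ (i + 1)
            * ∑ m ∈ Finset.range (n + 1 - i), b (m + i) * b m| := by
        rw [sub_eq_add_neg]
        exact (abs_add_le _ _).trans_eq (by rw [abs_neg])
    _ ≤ _ := add_le_add h1 h2

lemma class_partition (k : ℕ) (hk : 1 ≤ k) (Y : ℕ → ℝ) (n : ℕ) :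
    ∑ m ∈ Finset.range n, Y m
      = ∑ r ∈ Finset.range k, ∑ t ∈ Finset.range ((n + k - 1 - r) / k), Y (r + k * t) := by
  rw [Finset.sum_sigma']
  refine Finset.sum_nbij' (fun m => (⟨m % k, m / k⟩ : Σ _ : ℕ, ℕ)) (fun p => p.1 + k * p.2)
    ?_ ?_ ?_ ?_ ?_
  · intro m hm
    simp only [Finset.mem_range, Finset.mem_sigma] at hm ⊢
    constructor
    · exact Nat.mod_lt _ (by omega)
    · rw [Nat.lt_iff_add_one_le, Nat.le_div_iff_mul_le (by omega : 0 < k)]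
      have hdm := Nat.div_add_mod m k
      have e : (m / k + 1) * k = k * (m / k) + k := by ring
      omega
  · rintro ⟨r, t⟩ hp
    simp only [Finset.mem_range, Finset.mem_sigma] at hp ⊢
    obtain ⟨hr, ht⟩ := hp
    rw [Nat.lt_iff_add_one_le, Nat.le_div_iff_mul_le (by omega : 0 < k)] at ht
    have e : (t + 1) * k = k * t + k := by ring
    omega
  · intro m hm
    simp only
    rw [Nat.mod_add_div]
  · rintro ⟨r, t⟩ hp
    simp only [Finset.mem_range, Finset.mem_sigma] at hp
    obtain ⟨hr, ht⟩ := hp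
    have h1 : (r + k * t) % k = r := by
      rw [Nat.add_mul_mod_self_left]
      exact Nat.mod_eq_of_lt hr
    have h2 : (r + k * t) / k = t := by
      rw [Nat.add_mul_div_left _ _ (by omega : 0 < k), Nat.div_eq_of_lt hr]
      omega
    simp [h1, h2]
  · intro m hm
    simp only
    rw [Nat.mod_add_div]

lemma avg_classes (k : ℕ) (hk : 1 ≤ k) (Y : ℕ → ℝ) (hY : ∀ m, |Y m| ≤ 1)
    (h : ∀ r, r < k → Filter.Tendsto (fun M => (∑ t ∈ Finset.range M, Y (r + k * t)) / M)
      Filter.atTop (nhds 0)) :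
    Filter.Tendsto (fun n => (∑ m ∈ Finset.range n, Y m) / n) Filter.atTop (nhds 0) := by
  set c : ℕ → ℕ → ℕ := fun r n => (n + k - 1 - r) / k with hc
  have hctend : ∀ r, r < k → Filter.Tendsto (fun n => c r n) Filter.atTop Filter.atTop := by
    intro r hr
    rw [Filter.tendsto_atTop_atTop]
    intro B
    refine ⟨k * B + k + r, fun n hn => ?_⟩
    simp only [hc]
    rw [Nat.le_div_iff_mul_le (by omega : 0 < k)]
    have e : B * k = k * B := by ring
    omega
  have hcle : ∀ r n, c r n ≤ n := by
    intro r n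
    simp only [hc]
    have h1 : (n + k - 1 - r) / k ≤ (n + k - 1) / k := by
      apply Nat.div_le_div_right
      omega
    have h2 : (n + k - 1) / k ≤ n := by
      rw [Nat.div_le_iff_le_mul_add_pred (by omega : 0 < k)]
      have : n ≤ k * n := Nat.le_mul_of_pos_left n (by omega)
      omega
    omega
  have hbound : ∀ n : ℕ, |(∑ m ∈ Finset.range n, Y m) / n|
      ≤ ∑ r ∈ Finset.range k, |(∑ t ∈ Finset.range (c r n), Y (r + k * t)) / (c r n : ℝ)| := by
    intro n
    have hfold : ∀ r n : ℕ, (n + k - 1 - r) / k = c r n := fun _ _ => rfl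
    rw [class_partition k hk Y n, Finset.sum_div]
    simp only [hfold]
    refine (Finset.abs_sum_le_sum_abs _ _).trans (Finset.sum_le_sum fun r hr => ?_)
    rcases Nat.eq_zero_or_pos (c r n) with h0 | hpos
    · simp [h0]
    · rw [abs_div, abs_div]
      have hc1 : |(n : ℝ)| = (n : ℝ) := abs_of_nonneg (Nat.cast_nonneg n)
      have hc2 : |((c r n : ℕ) : ℝ)| = (c r n : ℝ) := abs_of_nonneg (Nat.cast_nonneg _)
      rw [hc1, hc2]
      exact div_le_div_of_nonneg_left (abs_nonneg _) (by exact_mod_cast hpos)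
        (by exact_mod_cast hcle r n)
  have hA : ∀ r ∈ Finset.range k, Filter.Tendsto
      (fun n => |(∑ t ∈ Finset.range (c r n), Y (r + k * t)) / (c r n : ℝ)|)
      Filter.atTop (nhds 0) := by
    intro r hr
    have h1 := (h r (Finset.mem_range.1 hr)).comp (hctend r (Finset.mem_range.1 hr))
    have h2 := h1.abs
    simpa [Function.comp] using h2
  have hg : Filter.Tendsto
      (fun n => ∑ r ∈ Finset.range k,
        |(∑ t ∈ Finset.range (c r n), Y (r + k * t)) / (c r n : ℝ)|)
      Filter.atTop (nhds 0) := by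
    have := tendsto_finset_sum (Finset.range k) hA
    simpa using this
  have hsq : Filter.Tendsto (fun n => |(∑ m ∈ Finset.range n, Y m) / (n : ℝ)|)
      Filter.atTop (nhds 0) :=
    squeeze_zero' (Filter.Eventually.of_forall fun n => abs_nonneg _)
      (Filter.Eventually.of_forall hbound) hg
  exact (tendsto_zero_iff_abs_tendsto_zero _).2 hsq



lemma corr_vanish (bf : ℕ → ℝ) (hb : ∀ m, |bf m| ≤ 1)
    (h : ∀ i, 1 ≤ i → Filter.Tendsto
      (fun M => (∑ m ∈ Finset.range M, bf (m + i) * bf m) / M) Filter.atTop (nhds 0)) :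
    Filter.Tendsto (fun n => (∑ i ∈ Finset.Icc 1 n, (1 / 2 : ℝ) ^ (i + 1)
      * |∑ m ∈ Finset.range (n + 1 - i), bf (m + i) * bf m|) / n) Filter.atTop (nhds 0) := by
  classical
  have habs : ∀ (i M : ℕ), |∑ m ∈ Finset.range M, bf (m + i) * bf m| ≤ (M : ℝ) := by
    intro i M
    calc |∑ m ∈ Finset.range M, bf (m + i) * bf m|
        ≤ ∑ m ∈ Finset.range M, |bf (m + i) * bf m| := Finset.abs_sum_le_sum_abs _ _
      _ ≤ ∑ _m ∈ Finset.range M, (1 : ℝ) := by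
          refine Finset.sum_le_sum fun m _ => ?_
          rw [abs_mul]
          exact mul_le_one₀ (hb _) (abs_nonneg _) (hb _)
      _ = M := by simp
  set f : ℕ → ℕ → ℝ := fun n i =>
    if 1 ≤ i ∧ i ≤ n then
      (1 / 2 : ℝ) ^ (i + 1) * |∑ m ∈ Finset.range (n + 1 - i), bf (m + i) * bf m| / n
    else 0 with hf
  have heq : ∀ n : ℕ, (∑ i ∈ Finset.Icc 1 n, (1 / 2 : ℝ) ^ (i + 1)
      * |∑ m ∈ Finset.range (n + 1 - i), bf (m + i) * bf m|) / n = ∑' i, f n i := by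
    intro n
    rw [Finset.sum_div, tsum_eq_sum (s := Finset.Icc 1 n) ?_]
    · refine Finset.sum_congr rfl fun i hi => ?_
      rw [Finset.mem_Icc] at hi
      simp only [hf]
      rw [if_pos hi]
    · intro i hi
      rw [Finset.mem_Icc] at hi
      simp only [hf]
      rw [if_neg hi]
  have hlim : ∀ i : ℕ, Filter.Tendsto (fun n => f n i) Filter.atTop (nhds 0) := by
    intro i
    rcases Nat.eq_zero_or_pos i with rfl | hi
    · refine Filter.Tendsto.congr' ?_ tendsto_const_nhds
      exact Filter.Eventually.of_forall fun n => by simp [hf]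
    · have hM : Filter.Tendsto (fun n : ℕ => n + 1 - i) Filter.atTop Filter.atTop := by
        rw [Filter.tendsto_atTop_atTop]
        intro B
        exact ⟨B + i, fun n hn => by omega⟩
      have hA := ((h i hi).comp hM).abs
      simp only [Function.comp_def] at hA
      rw [abs_zero] at hA
      refine squeeze_zero' (g := fun n => (1 / 2 : ℝ) ^ (i + 1)
          * |(∑ m ∈ Finset.range (n + 1 - i), bf (m + i) * bf m) / ((n + 1 - i : ℕ) : ℝ)|)
        (Filter.Eventually.of_forall fun n => ?_) ?_ ?_
      · simp only [hf]
        split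
        · positivity
        · exact le_refl 0
      · filter_upwards [Filter.eventually_ge_atTop i] with n hn
        simp only [hf]
        rw [if_pos ⟨hi, hn⟩]
        have hM1 : (1 : ℕ) ≤ n + 1 - i := by omega
        have hMn : (n + 1 - i : ℕ) ≤ n := by omega
        rw [abs_div, abs_of_nonneg (Nat.cast_nonneg (n + 1 - i) : (0:ℝ) ≤ ((n + 1 - i : ℕ) : ℝ)),
          mul_div_assoc]
        have hMpos : (0:ℝ) < ((n + 1 - i : ℕ) : ℝ) := by exact_mod_cast hM1
        have hMle : ((n + 1 - i : ℕ) : ℝ) ≤ (n : ℝ) := by exact_mod_cast hMn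
        exact mul_le_mul_of_nonneg_left
          (div_le_div_of_nonneg_left (abs_nonneg _) hMpos hMle) (by positivity)
      · have : Filter.Tendsto (fun n => (1 / 2 : ℝ) ^ (i + 1)
            * |(∑ m ∈ Finset.range (n + 1 - i), bf (m + i) * bf m) / ((n + 1 - i : ℕ) : ℝ)|)
            Filter.atTop (nhds ((1 / 2 : ℝ) ^ (i + 1) * 0)) := hA.const_mul _
        simpa using this
  have hbd : ∀ᶠ n in Filter.atTop, ∀ i, ‖f n i‖ ≤ (1 / 2 : ℝ) ^ (i + 1) := by
    filter_upwards [Filter.eventually_ge_atTop 1] with n hn i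
    simp only [hf]
    split
    · rename_i hcond
      have hnp : (0 : ℝ) < n := by exact_mod_cast hn
      rw [Real.norm_eq_abs, abs_div, abs_of_nonneg (by positivity : (0:ℝ) ≤ (1 / 2 : ℝ) ^ (i + 1)
        * |∑ m ∈ Finset.range (n + 1 - i), bf (m + i) * bf m|),
        abs_of_nonneg (Nat.cast_nonneg n : (0:ℝ) ≤ (n:ℝ)), div_le_iff₀ hnp]
      have h1 : |∑ m ∈ Finset.range (n + 1 - i), bf (m + i) * bf m| ≤ (n : ℝ) := by
        refine (habs i (n + 1 - i)).trans ?_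
        have hle : n + 1 - i ≤ n := by omega
        exact_mod_cast hle
      calc (1 / 2 : ℝ) ^ (i + 1) * |∑ m ∈ Finset.range (n + 1 - i), bf (m + i) * bf m|
          ≤ (1 / 2 : ℝ) ^ (i + 1) * (n : ℝ) := by gcongr
        _ = (1 / 2 : ℝ) ^ (i + 1) * (n : ℝ) := rfl
    · simp only [norm_zero]
      positivity
  have hsum : Summable (fun i : ℕ => (1 / 2 : ℝ) ^ (i + 1)) := by
    have := (summable_geometric_of_lt_one (by norm_num : (0:ℝ) ≤ 1/2)
      (by norm_num : (1/2 : ℝ) < 1)).mul_left (1/2)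
    refine this.congr fun i => ?_
    rw [pow_succ]
    ring
  have hmain := tendsto_tsum_of_dominated_convergence hsum hlim hbd
  rw [tsum_zero] at hmain
  exact hmain.congr fun n => (heq n).symm

lemma ofDigits_ofFn (f : ℕ → ℕ) : ∀ n : ℕ,
    Nat.ofDigits 2 (List.ofFn fun k : Fin (n + 1) => f k)
      = ∑ k ∈ Finset.range (n + 1), f k * 2 ^ k := by
  intro n
  induction n generalizing f with
  | zero => simp [Nat.ofDigits]
  | succ n ih =>
    rw [List.ofFn_succ]
    have e : (fun k : Fin (n + 1) => f ((Fin.succ k) : Fin (n + 2))) = fun k : Fin (n + 1) => (fun j => f (j + 1)) k := by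
      funext k
      simp [Fin.val_succ]
    rw [Nat.ofDigits_cons]
    have := ih (fun j => f (j + 1))
    rw [e, this]
    rw [Finset.sum_range_succ' (fun k => f k * 2 ^ k) (n + 1)]
    simp only [Fin.val_zero, pow_zero, mul_one]
    rw [Finset.mul_sum]
    have e2 : ∀ k, 2 * (f (k + 1) * 2 ^ k) = f (k + 1) * 2 ^ (k + 1) := by
      intro k
      rw [pow_succ]
      ring
    simp only [e2]
    omega
section Prob
variable {Ω : Type*} [MeasurableSpace Ω] (P : Measure Ω) [IsProbabilityMeasure P]
  (X : ℕ → Ω → ℕ)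

lemma law_eq (hXmeas : ∀ j, Measurable (X j)) (hXval : ∀ j ω, X j ω = 0 ∨ X j ω = 1)
    (hXdist : ∀ j, P {ω | X j ω = 0} = 1 / 2 ∧ P {ω | X j ω = 1} = 1 / 2) :
    ∀ j, Measure.map (X j) P = Measure.map (X 0) P := by
  intro j
  refine MeasureTheory.Measure.ext_of_singleton fun n => ?_
  rw [Measure.map_apply (hXmeas j) (measurableSet_singleton n),
    Measure.map_apply (hXmeas 0) (measurableSet_singleton n)]
  have hpre : ∀ (j' : ℕ), X j' ⁻¹' {n} = {ω | X j' ω = n} := fun j' => rfl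
  rw [hpre, hpre]
  match n with
  | 0 => rw [(hXdist j).1, (hXdist 0).1]
  | 1 => rw [(hXdist j).2, (hXdist 0).2]
  | (n + 2) =>
    have he : ∀ j' : ℕ, {ω | X j' ω = n + 2} = (∅ : Set Ω) := by
      intro j'
      ext ω
      simp only [Set.mem_setOf_eq, Set.mem_empty_iff_false, iff_false]
      rcases hXval j' ω with h | h <;> omega
    rw [he, he]

lemma b_integrable (hXmeas : ∀ j, Measurable (X j)) (hXval : ∀ j ω, X j ω = 0 ∨ X j ω = 1) (j : ℕ) :
    Integrable (fun ω => 2 * (X j ω : ℝ) - 1) P := by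
  have hmeas : Measurable (fun ω => 2 * (X j ω : ℝ) - 1) :=
    (((measurable_from_top (f := fun n : ℕ => (n : ℝ))).comp (hXmeas j)).const_mul 2).sub
      measurable_const
  refine (integrable_const (1 : ℝ)).mono' hmeas.aestronglyMeasurable ?_
  refine Filter.Eventually.of_forall fun ω => ?_
  rcases hXval j ω with h | h <;> simp [Real.norm_eq_abs, h] <;> norm_num

lemma b_integral (hXmeas : ∀ j, Measurable (X j)) (hXval : ∀ j ω, X j ω = 0 ∨ X j ω = 1)
    (hXdist : ∀ j, P {ω | X j ω = 0} = 1 / 2 ∧ P {ω | X j ω = 1} = 1 / 2) (j : ℕ) :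
    ∫ ω, (2 * (X j ω : ℝ) - 1) ∂P = 0 := by
  have hXr : (fun ω => (X j ω : ℝ)) = Set.indicator {ω | X j ω = 1} (fun _ => (1 : ℝ)) := by
    funext ω
    rcases hXval j ω with h | h <;>
      simp [Set.indicator_apply, Set.mem_setOf_eq, h]
  have hXint : Integrable (fun ω => (X j ω : ℝ)) P := by
    have hmeas : Measurable (fun ω => (X j ω : ℝ)) :=
      (measurable_from_top (f := fun n : ℕ => (n : ℝ))).comp (hXmeas j)
    refine (integrable_const (1 : ℝ)).mono' hmeas.aestronglyMeasurable ?_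
    refine Filter.Eventually.of_forall fun ω => ?_
    rcases hXval j ω with h | h <;> simp [Real.norm_eq_abs, h] <;> norm_num
  have hXmean : ∫ ω, (X j ω : ℝ) ∂P = 1 / 2 := by
    rw [hXr]
    have hms : MeasurableSet {ω | X j ω = 1} := (hXmeas j) (measurableSet_singleton 1)
    rw [MeasureTheory.integral_indicator_const (1 : ℝ) hms, measureReal_def, (hXdist j).2]
    simp [ENNReal.toReal_div]
  rw [integral_sub (hXint.const_mul 2) (integrable_const 1), integral_const,
    MeasureTheory.integral_const_mul, hXmean]
  simp

lemma pair_slln (hXmeas : ∀ j, Measurable (X j))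
    (hXindep : iIndepFun X P)
    (hXval : ∀ j ω, X j ω = 0 ∨ X j ω = 1)
    (hXdist : ∀ j, P {ω | X j ω = 0} = 1 / 2 ∧ P {ω | X j ω = 1} = 1 / 2)
    (i : ℕ) (hi : 1 ≤ i) (r : ℕ) :
    ∀ᵐ ω ∂P, Filter.Tendsto
      (fun M => (∑ t ∈ Finset.range M,
        (2 * (X (r + 2 * i * t + i) ω : ℝ) - 1) * (2 * (X (r + 2 * i * t) ω : ℝ) - 1)) / M)
      Filter.atTop (nhds 0) := by
  classical
  set f2 : ℕ × ℕ → ℝ := fun v => (2 * (v.1 : ℝ) - 1) * (2 * (v.2 : ℝ) - 1) with hf2def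
  have hf2 : Measurable f2 := by
    apply Measurable.mul
    · exact (((measurable_from_top (f := fun n : ℕ => (n : ℝ))).comp measurable_fst).const_mul
        2).sub measurable_const
    · exact (((measurable_from_top (f := fun n : ℕ => (n : ℝ))).comp measurable_snd).const_mul
        2).sub measurable_const
  set T : ℕ → Ω → ℝ := fun t ω =>
    (2 * (X (r + 2 * i * t + i) ω : ℝ) - 1) * (2 * (X (r + 2 * i * t) ω : ℝ) - 1) with hT
  have hTmeas : ∀ t, Measurable (T t) := by
    intro t
    exact hf2.comp ((hXmeas _).prodMk (hXmeas _))
  have hTint : Integrable (T 0) P := by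
    refine (integrable_const (1 : ℝ)).mono' (hTmeas 0).aestronglyMeasurable ?_
    refine Filter.Eventually.of_forall fun ω => ?_
    simp only [hT, Real.norm_eq_abs, abs_mul]
    rcases hXval (r + 2 * i * 0 + i) ω with h1 | h1 <;>
      rcases hXval (r + 2 * i * 0) ω with h2 | h2 <;>
      rw [h1, h2] <;> norm_num
  have hgap : ∀ t s : ℕ, t ≠ s → 2 * i * t + 2 * i ≤ 2 * i * s ∨ 2 * i * s + 2 * i ≤ 2 * i * t := by
    intro t s hts
    rcases Nat.lt_or_ge t s with h | h
    · left
      have : 2 * i * (t + 1) ≤ 2 * i * s := Nat.mul_le_mul_left _ (by omega)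
      have e : 2 * i * (t + 1) = 2 * i * t + 2 * i := by ring
      omega
    · right
      have hst : s < t := by omega
      have : 2 * i * (s + 1) ≤ 2 * i * t := Nat.mul_le_mul_left _ (by omega)
      have e : 2 * i * (s + 1) = 2 * i * s + 2 * i := by ring
      omega
  have hTindep : Pairwise (Function.onFun (ProbabilityTheory.IndepFun · · P) T) := by
    intro t s hts
    have hg := hgap t s hts
    have h1 : r + 2 * i * t + i ≠ r + 2 * i * s + i := by omega
    have h2 : r + 2 * i * t + i ≠ r + 2 * i * s := by omega
    have h3 : r + 2 * i * t ≠ r + 2 * i * s + i := by omega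
    have h4 : r + 2 * i * t ≠ r + 2 * i * s := by omega
    have hp := hXindep.indepFun_prodMk_prodMk hXmeas
      (r + 2 * i * t + i) (r + 2 * i * t) (r + 2 * i * s + i) (r + 2 * i * s) h1 h2 h3 h4
    exact hp.comp hf2 hf2
  have hTident : ∀ t, ProbabilityTheory.IdentDistrib (T t) (T 0) P P := by
    intro t
    have hlaw := law_eq P X hXmeas hXval hXdist
    have hpairlaw : ∀ u v : ℕ, u ≠ v →
        Measure.map (fun ω => (X u ω, X v ω)) P
          = (Measure.map (X 0) P).prod (Measure.map (X 0) P) := by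
      intro u v huv
      have hind := hXindep.indepFun huv
      rw [(ProbabilityTheory.indepFun_iff_map_prod_eq_prod_map_map
        (hXmeas u).aemeasurable (hXmeas v).aemeasurable).mp hind, hlaw u, hlaw v]
    have hZident : ProbabilityTheory.IdentDistrib
        (fun ω => (X (r + 2 * i * t + i) ω, X (r + 2 * i * t) ω))
        (fun ω => (X (r + 2 * i * 0 + i) ω, X (r + 2 * i * 0) ω)) P P := by
      refine ⟨((hXmeas _).prodMk (hXmeas _)).aemeasurable,
        ((hXmeas _).prodMk (hXmeas _)).aemeasurable, ?_⟩
      rw [hpairlaw _ _ (by omega), hpairlaw _ _ (by omega)]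
    exact hZident.comp hf2
  have hTmean : ∫ ω, T 0 ω ∂P = 0 := by
    have hind : ProbabilityTheory.IndepFun
        (fun ω => 2 * (X (r + 2 * i * 0 + i) ω : ℝ) - 1)
        (fun ω => 2 * (X (r + 2 * i * 0) ω : ℝ) - 1) P := by
      have hb : Measurable (fun n : ℕ => 2 * (n : ℝ) - 1) :=
        ((measurable_from_top (f := fun n : ℕ => (n : ℝ))).const_mul 2).sub measurable_const
      exact (hXindep.indepFun (by omega :
        r + 2 * i * 0 + i ≠ r + 2 * i * 0)).comp hb hb
    have hthis := hind.integral_fun_mul_eq_mul_integral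
      (b_integrable P X hXmeas hXval _).aestronglyMeasurable (b_integrable P X hXmeas hXval _).aestronglyMeasurable
    have h0 : ∫ ω, T 0 ω ∂P
        = (∫ ω, (2 * (X (r + 2 * i * 0 + i) ω : ℝ) - 1) ∂P)
          * ∫ ω, (2 * (X (r + 2 * i * 0) ω : ℝ) - 1) ∂P := hthis
    rw [h0, b_integral P X hXmeas hXval hXdist, b_integral P X hXmeas hXval hXdist]
    ring
  have hslln := ProbabilityTheory.strong_law_ae_real T hTint hTindep hTident
  rw [hTmean] at hslln
  filter_upwards [hslln] with ω hω
  exact hω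

end Prob
section Prob2
variable {Ω : Type*} [MeasurableSpace Ω] (P : Measure Ω) [IsProbabilityMeasure P]
  (X : ℕ → Ω → ℕ)

lemma prob_corr (hXmeas : ∀ j, Measurable (X j))
    (hXindep : iIndepFun X P)
    (hXval : ∀ j ω, X j ω = 0 ∨ X j ω = 1)
    (hXdist : ∀ j, P {ω | X j ω = 0} = 1 / 2 ∧ P {ω | X j ω = 1} = 1 / 2)
    (i : ℕ) (hi : 1 ≤ i) :
    ∀ᵐ ω ∂P, Filter.Tendsto
      (fun M => (∑ m ∈ Finset.range M,
        (2 * (X (m + i) ω : ℝ) - 1) * (2 * (X m ω : ℝ) - 1)) / M)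
      Filter.atTop (nhds 0) := by
  have hae : ∀ᵐ ω ∂P, ∀ r : ℕ, r < 2 * i → Filter.Tendsto
      (fun M => (∑ t ∈ Finset.range M,
        (2 * (X (r + 2 * i * t + i) ω : ℝ) - 1) * (2 * (X (r + 2 * i * t) ω : ℝ) - 1)) / M)
      Filter.atTop (nhds 0) := by
    rw [MeasureTheory.ae_all_iff]
    intro r
    by_cases hr : r < 2 * i
    · filter_upwards [pair_slln P X hXmeas hXindep hXval hXdist i hi r] with ω h
      exact fun _ => h
    · filter_upwards with ω h
      exact absurd h hr
  filter_upwards [hae] with ω hω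
  have hY : ∀ m : ℕ, |(2 * (X (m + i) ω : ℝ) - 1) * (2 * (X m ω : ℝ) - 1)| ≤ 1 := by
    intro m
    rw [abs_mul]
    rcases hXval (m + i) ω with h1 | h1 <;> rcases hXval m ω with h2 | h2 <;>
      rw [h1, h2] <;> norm_num
  have h := avg_classes (2 * i) (by omega)
    (fun m => (2 * (X (m + i) ω : ℝ) - 1) * (2 * (X m ω : ℝ) - 1)) hY ?_
  · exact h
  · intro r hr
    exact hω r hr

end Prob2

theorem generic_variance' (μ : ℕ → ℤ → ℝ)
    (hμ : ∀ a d, Tendsto (densSeq a d) atTop (nhds (μ a d)))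
    (Ω : Type*) [MeasurableSpace Ω] (P : Measure Ω) [IsProbabilityMeasure P]
    (X : ℕ → Ω → ℕ) (hXmeas : ∀ j, Measurable (X j))
    (hXindep : iIndepFun X P)
    (hXval : ∀ j ω, X j ω = 0 ∨ X j ω = 1)
    (hXdist : ∀ j, P {ω | X j ω = 0} = 1 / 2 ∧ P {ω | X j ω = 1} = 1 / 2)
    (aX : Ω → ℕ → ℕ) (haX : ∀ ω n, aX ω n = ∑ k ∈ range (n + 1), X k ω * 2 ^ k) :
    ∀ᵐ ω ∂P,
      Tendsto (fun n : ℕ => (∑' d : ℤ, (d : ℝ) ^ 2 * μ (aX ω n) d) / n) atTop (nhds (1 / 2)) := by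
  classical
  set V : ℕ → ℝ := fun a => ∑' d : ℤ, (d : ℝ) ^ 2 * μ a d with hV
  have hV0 : V 0 = 0 := var_zero' hμ
  have hV1 : V 1 = 2 := var_one' hμ
  have hVe : ∀ b, V (2 * b) = V b := fun b => var_rec_even hμ b
  have hVo : ∀ b, V (2 * b + 1) = (V b + V (b + 1)) / 2 + 1 := by
    intro b
    have h := var_rec_odd hμ b
    simp only [hV]
    rw [h]
    ring
  have hcorr : ∀ᵐ ω ∂P, ∀ i : ℕ, 1 ≤ i → Tendsto
      (fun M => (∑ m ∈ Finset.range M,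
        (2 * (X (m + i) ω : ℝ) - 1) * (2 * (X m ω : ℝ) - 1)) / M) atTop (nhds 0) := by
    rw [MeasureTheory.ae_all_iff]
    intro i
    by_cases hi : 1 ≤ i
    · filter_upwards [prob_corr P X hXmeas hXindep hXval hXdist i hi] with ω h
      exact fun _ => h
    · filter_upwards with ω h
      exact absurd h hi
  filter_upwards [hcorr] with ω hω
  have hx1 : ∀ j, X j ω ≤ 1 := fun j => by rcases hXval j ω with h | h <;> omega
  -- the identity
  have hid : ∀ n : ℕ, V (aX ω n)
      = (∑ j ∈ Finset.range (n + 1), qseq (fun k => X k ω) j)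
        + (2 - 2 * pseq (fun k => X k ω) (n + 1)) := by
    intro n
    have hlist : ∀ y ∈ (List.ofFn fun k : Fin (n + 1) => X k ω), y ≤ 1 := by
      intro y hy
      rw [List.mem_ofFn] at hy
      obtain ⟨k, hk⟩ := hy
      rw [← hk]
      exact hx1 k
    have hofd : aX ω n = Nat.ofDigits 2 (List.ofFn fun k : Fin (n + 1) => X k ω) := by
      rw [haX ω n]
      exact (ofDigits_ofFn (fun k => X k ω) n).symm
    have hpair := pair_foldr V hV0 hV1 hVe hVo (List.ofFn fun k : Fin (n + 1) => X k ω) hlist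
    have h2 := foldr_eval (fun k => X k ω) hx1 n (0, 2)
    calc V (aX ω n) = ((List.ofFn fun k : Fin (n + 1) => X k ω).foldr stepP (0, 2)).1 := by
          rw [hofd]
          exact congrArg Prod.fst hpair
      _ = (∑ j ∈ Finset.range (n + 1), qseq (fun k => X k ω) j)
            + pseq (fun k => X k ω) (n + 1) * (0 : ℝ)
            + (1 - pseq (fun k => X k ω) (n + 1)) * (2 : ℝ) := h2
      _ = _ := by ring
  -- deviation limit
  have hbf : ∀ m, |2 * (X m ω : ℝ) - 1| ≤ 1 := by
    intro m
    rcases hXval m ω with h | h <;> rw [h] <;> norm_num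
  have hD := corr_vanish (fun m => 2 * (X m ω : ℝ) - 1) hbf (fun i hi => hω i hi)
  have hqdev : Tendsto (fun n : ℕ =>
      ((∑ j ∈ Finset.range (n + 1), qseq (fun k => X k ω) j) - ((n : ℝ) + 1) / 2) / n)
      atTop (nhds 0) := by
    rw [tendsto_zero_iff_abs_tendsto_zero]
    have hbound : ∀ n : ℕ, |((∑ j ∈ Finset.range (n + 1), qseq (fun k => X k ω) j)
        - ((n : ℝ) + 1) / 2) / n|
        ≤ 1 / n + (∑ i ∈ Finset.Icc 1 n, (1 / 2 : ℝ) ^ (i + 1)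
            * |∑ m ∈ Finset.range (n + 1 - i),
                (2 * (X (m + i) ω : ℝ) - 1) * (2 * (X m ω : ℝ) - 1)|) / n := by
      intro n
      rcases Nat.eq_zero_or_pos n with rfl | hn
      · simp
      · have hnp : (0 : ℝ) < n := by exact_mod_cast hn
        rw [abs_div, abs_of_nonneg hnp.le, ← add_div]
        gcongr
        exact qsum_bound (fun k => X k ω) hx1 n
    have hlim : Tendsto (fun n : ℕ => 1 / (n : ℝ)
        + (∑ i ∈ Finset.Icc 1 n, (1 / 2 : ℝ) ^ (i + 1)
            * |∑ m ∈ Finset.range (n + 1 - i),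
                (2 * (X (m + i) ω : ℝ) - 1) * (2 * (X m ω : ℝ) - 1)|) / n)
        atTop (nhds 0) := by
      have h1 := tendsto_one_div_atTop_nhds_zero_nat (𝕜 := ℝ)
      have := h1.add hD
      simpa using this
    exact squeeze_zero' (Filter.Eventually.of_forall fun n => abs_nonneg _)
      (Filter.Eventually.of_forall hbound) hlim
  have hhalf : Tendsto (fun n : ℕ => (((n : ℝ) + 1) / 2) / n) atTop (nhds (1 / 2)) := by
    have h1 := tendsto_one_div_atTop_nhds_zero_nat (𝕜 := ℝ)
    have h2 : Tendsto (fun n : ℕ => 1 / 2 + (1 / (n : ℝ)) / 2) atTop (nhds (1 / 2)) := by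
      have := (h1.div_const 2).const_add (1 / 2 : ℝ)
      simpa using this
    refine h2.congr' ?_
    filter_upwards [Filter.eventually_ge_atTop 1] with n hn
    have hnp : (0 : ℝ) < n := by exact_mod_cast hn
    field_simp [hnp.ne']
    try ring
    try tauto
  have hq2 : Tendsto (fun n : ℕ =>
      (∑ j ∈ Finset.range (n + 1), qseq (fun k => X k ω) j) / n) atTop (nhds (1 / 2)) := by
    have := hqdev.add hhalf
    rw [zero_add] at this
    refine this.congr fun n => ?_
    rw [← add_div, sub_add_cancel]
  have hrem : Tendsto (fun n : ℕ => (2 - 2 * pseq (fun k => X k ω) (n + 1)) / n)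
      atTop (nhds 0) := by
    rw [tendsto_zero_iff_abs_tendsto_zero]
    have hbound : ∀ n : ℕ, |(2 - 2 * pseq (fun k => X k ω) (n + 1)) / n| ≤ 2 / n := by
      intro n
      rcases Nat.eq_zero_or_pos n with rfl | hn
      · simp
      · have hnp : (0 : ℝ) < n := by exact_mod_cast hn
        rw [abs_div, abs_of_nonneg hnp.le]
        gcongr
        have hp := pseq_mem (fun k => X k ω) hx1 (n + 1)
        rw [abs_of_nonneg (by linarith [hp.2])]
        linarith [hp.1]
    have hlim : Tendsto (fun n : ℕ => 2 / (n : ℝ)) atTop (nhds 0) := by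
      have := (tendsto_one_div_atTop_nhds_zero_nat (𝕜 := ℝ)).const_mul (2 : ℝ)
      simpa [div_eq_mul_inv, one_div] using this
    exact squeeze_zero' (Filter.Eventually.of_forall fun n => abs_nonneg _)
      (Filter.Eventually.of_forall hbound) hlim
  have hfin := hq2.add hrem
  rw [add_zero] at hfin
  refine hfin.congr fun n => ?_
  rw [← add_div, ← hid n]


theorem generic_variance (μ : ℕ → ℤ → ℝ)
    (hμ : ∀ a d, Tendsto (densSeq a d) atTop (nhds (μ a d)))
    (Ω : Type*) [MeasurableSpace Ω] (P : Measure Ω) [IsProbabilityMeasure P]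
    (X : ℕ → Ω → ℕ) (hXmeas : ∀ j, Measurable (X j))
    (hXindep : iIndepFun X P)
    (hXval : ∀ j ω, X j ω = 0 ∨ X j ω = 1)
    (hXdist : ∀ j, P {ω | X j ω = 0} = 1 / 2 ∧ P {ω | X j ω = 1} = 1 / 2)
    (aX : Ω → ℕ → ℕ) (haX : ∀ ω n, aX ω n = ∑ k ∈ range (n + 1), X k ω * 2 ^ k) :
    ∀ᵐ ω ∂P,
      Tendsto (fun n : ℕ => var μ (aX ω n) / n) atTop (nhds (1 / 2)) :=
  generic_variance' μ hμ Ω P X hXmeas hXindep hXval hXdist aX haX
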